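/- Let n ≥ 3 be an odd integer and θ ∈ (0, π/4]. There is a unique point t_{n−1,0} ∈ (−∞, t_{n,1}) such that H_n(t_{n−1,0}) = −H_n(t_{n−1,1}), where t_{n−1,1} is the smallest zero of H_{n−1}. Then: (1) for every t ≤ t_{n,1}, the function y ↦ Φ_n^θ(t,y) has exactly one zero in the interval [t_{n,n}, +∞); (2) for every t < t_{n−1,0}, the function y ↦ Φ_n^θ(t,y) has exactly one zero in ℝ. -/
import Mathlib


open Polynomial Real Set

/-- Physicists' Hermite polynomials: `H 0 = 1`, `H 1 = 2X`,
`H (n+2) = 2X * H (n+1) - 2(n+1) * H n`. -/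
noncomputable def hermiteH : ℕ → Polynomial ℝ
  | 0 => 1
  | 1 => Polynomial.C 2 * Polynomial.X
  | (n + 2) => Polynomial.C 2 * Polynomial.X * hermiteH (n + 1)
      - Polynomial.C ((2 * (n + 1) : ℕ) : ℝ) * hermiteH n

/-- `z : Fin m → ℝ` enumerates the zeros of `P` in increasing order. -/
def IsZeroEnum (P : Polynomial ℝ) (m : ℕ) (z : Fin m → ℝ) : Prop :=
  StrictMono z ∧ (∀ i, P.eval (z i) = 0) ∧ (∀ x : ℝ, P.eval x = 0 → ∃ i, x = z i)

/-- The eigenfunction `Φ_n^θ`. -/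
noncomputable def Phi (n : ℕ) (θ : ℝ) (p : ℝ × ℝ) : ℝ :=
  (Real.cos θ * (hermiteH n).eval p.1 + Real.sin θ * (hermiteH n).eval p.2) *
    Real.exp (-(p.1 ^ 2 + p.2 ^ 2) / 2)

/-- A critical zero of `u` : a common zero of `u` and its differential. -/
def IsCriticalZero (u : ℝ × ℝ → ℝ) (p : ℝ × ℝ) : Prop :=
  u p = 0 ∧ fderiv ℝ u p = 0

/-- Nodal set of `u`. -/
def nodalSet (u : ℝ × ℝ → ℝ) : Set (ℝ × ℝ) := {p | u p = 0}

/-- The set of nodal domains of `u`, i.e. of connected components of the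
complement of the nodal set. -/
def nodalDomains (u : ℝ × ℝ → ℝ) : Set (Set (ℝ × ℝ)) :=
  {C | ∃ p, u p ≠ 0 ∧ C = connectedComponentIn {q | u q ≠ 0} p}


lemma hermiteH_rec (n : ℕ) : hermiteH (n + 2) = Polynomial.C 2 * Polynomial.X * hermiteH (n + 1)
      - Polynomial.C ((2 * (n + 1) : ℕ) : ℝ) * hermiteH n := rfl

lemma hermiteH_deg_lc : ∀ n : ℕ, (hermiteH n).degree = (n : WithBot ℕ) ∧ (hermiteH n).leadingCoeff = 2 ^ n
  | 0 => by simp [hermiteH]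
  | 1 => by
      have h1 : hermiteH 1 = Polynomial.C 2 * Polynomial.X := rfl
      constructor
      · rw [h1, degree_C_mul (by norm_num : (2:ℝ) ≠ 0), degree_X]; rfl
      · rw [h1, leadingCoeff_mul]; simp
  | (n + 2) => by
      obtain ⟨hd1, hl1⟩ := hermiteH_deg_lc (n + 1)
      obtain ⟨hd0, hl0⟩ := hermiteH_deg_lc n
      have hmain : (Polynomial.C 2 * Polynomial.X * hermiteH (n + 1)).degree
          = ((n + 2 : ℕ) : WithBot ℕ) := by
        rw [degree_mul, degree_mul, hd1, degree_C (by norm_num : (2:ℝ) ≠ 0), degree_X]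
        rw [zero_add]
        rw [show (n:ℕ) + 2 = 1 + (n + 1) by omega]
        push_cast
        rfl
      have hsmall : (Polynomial.C ((2 * (n + 1) : ℕ) : ℝ) * hermiteH n).degree
          < ((n + 2 : ℕ) : WithBot ℕ) := by
        calc (Polynomial.C ((2 * (n + 1) : ℕ) : ℝ) * hermiteH n).degree
            ≤ 0 + (hermiteH n).degree := by
              rw [degree_mul]
              exact add_le_add degree_C_le le_rfl
          _ = (n : WithBot ℕ) := by rw [hd0, zero_add]
          _ < ((n + 2 : ℕ) : WithBot ℕ) := by exact_mod_cast Nat.lt_succ_of_lt (Nat.lt_succ_self n)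
      rw [hermiteH_rec]
      constructor
      · rw [degree_sub_eq_left_of_degree_lt (by rw [hmain]; exact hsmall), hmain]
      · rw [leadingCoeff_sub_of_degree_lt (by rw [hmain]; exact hsmall),
          leadingCoeff_mul, leadingCoeff_mul, hl1]
        simp [leadingCoeff_C]
        ring

lemma hermiteH_ne_zero (n : ℕ) : hermiteH n ≠ 0 := by
  intro h
  have := (hermiteH_deg_lc n).1
  rw [h, degree_zero] at this
  exact absurd this (by simp)

lemma hermiteH_natDegree (n : ℕ) : (hermiteH n).natDegree = n :=
  natDegree_eq_of_degree_eq_some (hermiteH_deg_lc n).1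

lemma hermiteH_derivative : ∀ n : ℕ,
    derivative (hermiteH (n + 1)) = Polynomial.C ((2 * (n + 1) : ℕ) : ℝ) * hermiteH n
  | 0 => by simp [hermiteH]
  | 1 => by
      rw [hermiteH_rec 0]
      simp only [derivative_sub, derivative_mul, derivative_C, derivative_X]
      have h1 : hermiteH 1 = Polynomial.C 2 * Polynomial.X := rfl
      have h0 : hermiteH 0 = 1 := rfl
      rw [h1, h0]
      apply Polynomial.funext
      intro x
      simp
      ring
  | (n + 2) => by
      have ih1 := hermiteH_derivative (n + 1)
      have ih0 := hermiteH_derivative n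
      rw [hermiteH_rec]
      simp only [derivative_sub, derivative_mul, derivative_C, derivative_X, ih1, ih0]
      rw [hermiteH_rec n]
      apply Polynomial.funext
      intro x
      simp
      ring

lemma hermiteH_eval_neg : ∀ (n : ℕ) (x : ℝ),
    (hermiteH n).eval (-x) = (-1) ^ n * (hermiteH n).eval x
  | 0, x => by simp [hermiteH]
  | 1, x => by
      have h1 : hermiteH 1 = Polynomial.C 2 * Polynomial.X := rfl
      rw [h1]; simp
  | (n + 2), x => by
      have ih1 := hermiteH_eval_neg (n + 1) x
      have ih0 := hermiteH_eval_neg n x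
      rw [hermiteH_rec]
      simp only [eval_sub, eval_mul, eval_C, eval_X, ih1, ih0]
      ring

open Filter

lemma hermiteH_tendsto_atTop {n : ℕ} (hn : 0 < n) :
    Tendsto (fun x => (hermiteH n).eval x) atTop atTop := by
  apply Polynomial.tendsto_atTop_of_leadingCoeff_nonneg
  · rw [(hermiteH_deg_lc n).1]; exact_mod_cast hn
  · rw [(hermiteH_deg_lc n).2]; positivity

lemma hermiteH_tendsto_atBot_even {n : ℕ} (hn : 0 < n) (he : Even n) :
    Tendsto (fun x => (hermiteH n).eval x) atBot atTop := by
  have h : (fun x : ℝ => (hermiteH n).eval x) = (fun x => (hermiteH n).eval (-(-x))) := by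
    funext x; simp
  rw [h]
  have := (hermiteH_tendsto_atTop hn).comp tendsto_neg_atBot_atTop
  apply this.congr
  intro x
  simp [hermiteH_eval_neg, he.neg_one_pow]

lemma hermiteH_tendsto_atBot_odd {n : ℕ} (ho : Odd n) :
    Tendsto (fun x => (hermiteH n).eval x) atBot atBot := by
  have hn : 0 < n := ho.pos
  have h2 : Tendsto (fun x : ℝ => -(hermiteH n).eval (-x)) atBot atBot := by
    apply tendsto_neg_atTop_atBot.comp
    exact (hermiteH_tendsto_atTop hn).comp tendsto_neg_atBot_atTop
  apply h2.congr
  intro x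
  rw [hermiteH_eval_neg, ho.neg_one_pow]
  ring

lemma hermiteH_F_deriv (m : ℕ) :
    derivative (Polynomial.C ((2 * (m+2) : ℕ) : ℝ) * (hermiteH (m+2))^2
      + (derivative (hermiteH (m+2)))^2)
    = Polynomial.C 4 * Polynomial.X * (derivative (hermiteH (m+2)))^2 := by
  have hd2 : derivative (hermiteH (m+2)) = Polynomial.C ((2 * (m+2) : ℕ) : ℝ) * hermiteH (m+1) :=
    hermiteH_derivative (m+1)
  have hd1 : derivative (hermiteH (m+1)) = Polynomial.C ((2 * (m+1) : ℕ) : ℝ) * hermiteH m :=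
    hermiteH_derivative m
  simp only [derivative_add, derivative_mul, derivative_C, derivative_pow, hd2, hd1]
  rw [hermiteH_rec m]
  apply Polynomial.funext
  intro x
  simp
  push_cast
  ring

lemma roots_bound {P : Polynomial ℝ} (hP : P ≠ 0) {m : ℕ} (hdeg : P.natDegree = m)
    (c : Fin m → ℝ) (hinj : Function.Injective c) (hroot : ∀ i, P.eval (c i) = 0)
    {x : ℝ} (hx : P.eval x = 0) : ∃ i, x = c i := by
  classical
  have hsub : Finset.image c Finset.univ ⊆ P.roots.toFinset := by
    intro y hy
    obtain ⟨i, _, rfl⟩ := Finset.mem_image.1 hy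
    rw [Multiset.mem_toFinset, mem_roots hP]
    exact hroot i
  have hcard : P.roots.toFinset.card ≤ m := by
    calc P.roots.toFinset.card ≤ Multiset.card P.roots := P.roots.toFinset_card_le
      _ ≤ P.natDegree := P.card_roots'
      _ = m := hdeg
  have hcard2 : (Finset.image c Finset.univ).card = m := by
    rw [Finset.card_image_of_injective _ hinj, Finset.card_univ, Fintype.card_fin]
  have heq : Finset.image c Finset.univ = P.roots.toFinset :=
    Finset.eq_of_subset_of_card_le hsub (by omega)
  have hxmem : x ∈ P.roots.toFinset := by
    rw [Multiset.mem_toFinset, mem_roots hP]; exact hx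
  rw [← heq, Finset.mem_image] at hxmem
  obtain ⟨i, _, hi⟩ := hxmem
  exact ⟨i, hi.symm⟩

set_option maxHeartbeats 1000000 in
/-- (Barrier lemma, vertical version.) Let `n ≥ 3` be odd and
`θ ∈ (0, π/4]`. There is a unique `t₀ < t_{n,1}` with `H_n(t₀) = -H_n(t_{n-1,1})`,
and for this `t₀`:
(1) for every `t ≤ t_{n,1}`, `y ↦ Φ_n^θ(t,y)` has exactly one zero in `[t_{n,n}, ∞)`;
(2) for every `t < t₀`, `y ↦ Φ_n^θ(t,y)` has exactly one zero in `ℝ`. -/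
theorem barrier_lemma_vertical
    (n : ℕ) (hn3 : 3 ≤ n) (hodd : Odd n)
    (θ : ℝ) (hθ : θ ∈ Set.Ioc 0 (π / 4))
    (tn : Fin n → ℝ) (htn : IsZeroEnum (hermiteH n) n tn)
    (tz : Fin (n - 1) → ℝ) (htz : IsZeroEnum (hermiteH (n - 1)) (n - 1) tz) :
    (∃! t₀ : ℝ, t₀ < tn ⟨0, by omega⟩ ∧
      (hermiteH n).eval t₀ = -(hermiteH n).eval (tz ⟨0, by omega⟩)) ∧
    ∀ t₀ : ℝ, (t₀ < tn ⟨0, by omega⟩ ∧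
        (hermiteH n).eval t₀ = -(hermiteH n).eval (tz ⟨0, by omega⟩)) →
      (∀ t : ℝ, t ≤ tn ⟨0, by omega⟩ →
        ∃! y : ℝ, y ∈ Set.Ici (tn ⟨n - 1, by omega⟩) ∧ Phi n θ (t, y) = 0) ∧
      (∀ t : ℝ, t < t₀ → ∃! y : ℝ, Phi n θ (t, y) = 0) := by
  obtain ⟨hmn, hzn, han⟩ := htn
  obtain ⟨hmz, hzz, haz⟩ := htz
  set H : ℝ → ℝ := fun x => (hermiteH n).eval x with hH
  set Hz : ℝ → ℝ := fun x => (hermiteH (n-1)).eval x with hHz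
  have hcontH : Continuous H := by exact (hermiteH n).continuous_aeval
  have hcontHz : Continuous Hz := by exact (hermiteH (n-1)).continuous_aeval
  set a : ℝ := tn ⟨0, by omega⟩ with ha
  set b : ℝ := tn ⟨n - 1, by omega⟩ with hb
  set s0 : ℝ := tz ⟨0, by omega⟩ with hs0
  set s1 : ℝ := tz ⟨n - 2, by omega⟩ with hs1
  -- derivative of H
  have hderH : ∀ x : ℝ, deriv H x = ((2 * n : ℕ) : ℝ) * Hz x := by
    have h := hermiteH_derivative (n - 1)
    rw [show n - 1 + 1 = n from by omega] at h
    intro x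
    rw [hH, Polynomial.deriv, h]
    simp [hHz]
  -- derivative of Hz is controlled later only via positivity; Rolle step:
  have hrolle : ∀ i : Fin (n - 1), ∃ s,
      tn ⟨i.1, by omega⟩ < s ∧ s < tn ⟨i.1 + 1, by have := i.isLt; omega⟩ ∧ Hz s = 0 := by
    intro i
    have hlt : tn ⟨i.1, by omega⟩ < tn ⟨i.1 + 1, by have := i.isLt; omega⟩ :=
      hmn (by exact Fin.mk_lt_mk.2 (lt_add_one _))
    have heq : H (tn ⟨i.1, by omega⟩) = H (tn ⟨i.1 + 1, by have := i.isLt; omega⟩) := by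
      rw [hH]; simp only []
      rw [hzn ⟨i.1, by omega⟩, hzn ⟨i.1 + 1, by have := i.isLt; omega⟩]
    obtain ⟨s, hs, hds⟩ := exists_deriv_eq_zero hlt hcontH.continuousOn heq
    refine ⟨s, hs.1, hs.2, ?_⟩
    rw [hderH s] at hds
    have h2n : ((2 * n : ℕ) : ℝ) ≠ 0 := Nat.cast_ne_zero.2 (by omega)
    exact (mul_eq_zero.1 hds).resolve_left h2n
  choose c hc1 hc2 hc3 using hrolle
  -- c is strictly monotone, hence injective
  have hcmono : ∀ i j : Fin (n - 1), i < j → c i < c j := by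
    intro i j hij
    calc c i < tn ⟨i.1 + 1, by have := i.isLt; omega⟩ := hc2 i
      _ ≤ tn ⟨j.1, by omega⟩ := hmn.monotone (Fin.mk_le_mk.2 (by exact hij))
      _ < c j := hc1 j
  have hcinj : Function.Injective c := by
    intro i j hij
    rcases lt_trichotomy i j with h | h | h
    · exact absurd hij (ne_of_lt (hcmono _ _ h))
    · exact h
    · exact absurd hij.symm (ne_of_lt (hcmono _ _ h))
  -- every root of hermiteH (n-1) lies strictly between a and b
  have hbound : ∀ x : ℝ, Hz x = 0 → a < x ∧ x < b := by
    intro x hx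
    obtain ⟨i, rfl⟩ := roots_bound (hermiteH_ne_zero (n-1)) (hermiteH_natDegree (n-1)) c hcinj hc3 hx
    constructor
    · exact lt_of_le_of_lt (hmn.monotone (Fin.mk_le_mk.2 (Nat.zero_le _))) (hc1 i)
    · exact lt_of_lt_of_le (hc2 i) (hmn.monotone (Fin.mk_le_mk.2 (by have := i.isLt; omega)))
  -- s0 and s1 are the extreme roots
  have hminmax : ∀ x : ℝ, Hz x = 0 → s0 ≤ x ∧ x ≤ s1 := by
    intro x hx
    obtain ⟨i, rfl⟩ := haz x hx
    exact ⟨hmz.monotone (Fin.mk_le_mk.2 (Nat.zero_le _)),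
      hmz.monotone (Fin.mk_le_mk.2 (by have := i.isLt; omega))⟩
  have has0 : a < s0 := (hbound s0 (hzz _)).1
  have hs1b : s1 < b := (hbound s1 (hzz _)).2
  have hs0s1 : s0 < s1 := hmz (Fin.mk_lt_mk.2 (by omega))
  -- symmetry of roots of even Hermite polynomial
  have heven : Even (n - 1) := by
    obtain ⟨k, hk⟩ := hodd; exact ⟨k, by omega⟩
  have hzneg : ∀ x : ℝ, Hz x = 0 → Hz (-x) = 0 := by
    intro x hx
    rw [hHz] at hx ⊢
    simp only [hermiteH_eval_neg, heven.neg_one_pow, one_mul]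
    exact hx
  have hs0neg : s0 = -s1 := by
    have h1 := (hminmax (-s1) (hzneg s1 (hzz _))).1
    have h2 := (hminmax (-s0) (hzneg s0 (hzz _))).2
    linarith
  have hs0lt0 : s0 < 0 := by linarith
  have hs1gt0 : 0 < s1 := by linarith
  -- positivity of Hz outside the root interval
  have hposn1 : 0 < n - 1 := by omega
  have hpos_left : ∀ x : ℝ, x < s0 → 0 < Hz x := by
    intro x hx
    by_contra hcon
    push_neg at hcon
    have hne : Hz x ≠ 0 := fun h => absurd (hminmax x h).1 (not_le.2 hx)
    have hlt : Hz x < 0 := lt_of_le_of_ne hcon hne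
    have hev : ∀ᶠ y in atBot, (0:ℝ) < Hz y :=
      (hermiteH_tendsto_atBot_even hposn1 heven).eventually (eventually_gt_atTop 0)
    obtain ⟨y, hy1, hy2⟩ := (hev.and (eventually_le_atBot x)).exists
    have hyx : y ≤ x := hy2
    have : (0:ℝ) ∈ Icc (Hz x) (Hz y) := ⟨le_of_lt hlt, le_of_lt hy1⟩
    obtain ⟨z, hz1, hz2⟩ := intermediate_value_Icc' hyx hcontHz.continuousOn this
    have := (hminmax z hz2).1
    have := hz1.2
    linarith
  have hpos_right : ∀ x : ℝ, s1 < x → 0 < Hz x := by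
    intro x hx
    by_contra hcon
    push_neg at hcon
    have hne : Hz x ≠ 0 := fun h => absurd (hminmax x h).2 (not_le.2 hx)
    have hlt : Hz x < 0 := lt_of_le_of_ne hcon hne
    have hev : ∀ᶠ y in atTop, (0:ℝ) < Hz y :=
      (hermiteH_tendsto_atTop hposn1).eventually (eventually_gt_atTop 0)
    obtain ⟨y, hy1, hy2⟩ := (hev.and (eventually_ge_atTop x)).exists
    have hxy : x ≤ y := hy2
    have : (0:ℝ) ∈ Icc (Hz x) (Hz y) := ⟨le_of_lt hlt, le_of_lt hy1⟩
    obtain ⟨z, hz1, hz2⟩ := intermediate_value_Icc hxy hcontHz.continuousOn this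
    have := (hminmax z hz2).2
    have := hz1.1
    linarith
  -- strict monotonicity of H on (-inf, s0] and [s1, inf)
  have hmono_left : StrictMonoOn H (Iic s0) := by
    apply strictMonoOn_of_deriv_pos (convex_Iic s0) hcontH.continuousOn
    intro x hx
    rw [interior_Iic] at hx
    rw [hderH x]
    have := hpos_left x hx
    have h2n : (0:ℝ) < ((2 * n : ℕ) : ℝ) := by
      have : 0 < 2 * n := by omega
      exact_mod_cast this
    positivity
  have hmono_right : StrictMonoOn H (Ici s1) := by
    apply strictMonoOn_of_deriv_pos (convex_Ici s1) hcontH.continuousOn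
    intro x hx
    rw [interior_Ici] at hx
    rw [hderH x]
    have := hpos_right x hx
    have h2n : (0:ℝ) < ((2 * n : ℕ) : ℝ) := by
      have : 0 < 2 * n := by omega
      exact_mod_cast this
    positivity
  -- basic values
  have hHa : H a = 0 := hzn _
  have hHb : H b = 0 := hzn _
  set K : ℝ := H s0 with hKdef
  have hK : 0 < K := by
    have := hmono_left (mem_Iic.2 (le_of_lt has0)) (mem_Iic.2 le_rfl) has0
    rw [hHa] at this; exact this
  have hHs1 : H s1 = -K := by
    rw [hKdef, hs0neg, hH]
    simp only []
    rw [hermiteH_eval_neg, hodd.neg_one_pow]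
    ring
  have hHle : ∀ t : ℝ, t ≤ a → H t ≤ 0 := by
    intro t ht
    rcases eq_or_lt_of_le ht with heq | hlt
    · rw [heq, hHa]
    · refine le_of_lt ?_
      rw [← hHa]
      exact hmono_left (mem_Iic.2 (by linarith)) (mem_Iic.2 (le_of_lt has0)) hlt
  -- the auxiliary function G
  have hdpoly : derivative (hermiteH n) = Polynomial.C ((2 * n : ℕ) : ℝ) * hermiteH (n - 1) := by
    have h := hermiteH_derivative (n - 1)
    rw [show n - 1 + 1 = n from by omega] at h
    exact h
  set Fp : Polynomial ℝ := Polynomial.C ((2 * n : ℕ) : ℝ) * (hermiteH n)^2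
      + (derivative (hermiteH n))^2 with hFp
  have hFderiv : derivative Fp = Polynomial.C 4 * Polynomial.X * (derivative (hermiteH n))^2 := by
    have h := hermiteH_F_deriv (n - 2)
    rw [show n - 2 + 2 = n from by omega] at h
    exact h
  set G : ℝ → ℝ := fun x => Fp.eval x with hG
  have hcontG : Continuous G := Fp.continuous_aeval
  have hdiffG : Differentiable ℝ G := Fp.differentiable_aeval
  have hderG : ∀ x : ℝ, deriv G x = 4 * x * ((derivative (hermiteH n)).eval x)^2 := by
    intro x
    rw [hG, Polynomial.deriv, hFderiv]
    simp
  have hGy : ∀ y : ℝ, G y = ((2 * n : ℕ) : ℝ) * (H y)^2 + (((2 * n : ℕ) : ℝ) * Hz y)^2 := by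
    intro y
    rw [hG, hFp, hdpoly]
    simp [hH, hHz]
  have hGanti : AntitoneOn G (Iic 0) := by
    apply antitoneOn_of_deriv_nonpos (convex_Iic 0) hcontG.continuousOn
      (hdiffG.differentiableOn)
    intro x hx
    rw [interior_Iic] at hx
    rw [hderG]
    have hx0 : x < 0 := hx
    nlinarith [sq_nonneg ((derivative (hermiteH n)).eval x)]
  have hGmono : MonotoneOn G (Ici 0) := by
    apply monotoneOn_of_deriv_nonneg (convex_Ici 0) hcontG.continuousOn
      (hdiffG.differentiableOn)
    intro x hx
    rw [interior_Ici] at hx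
    rw [hderG]
    have hx0 : 0 < x := hx
    nlinarith [sq_nonneg ((derivative (hermiteH n)).eval x)]
  have hzs0 : Hz s0 = 0 := hzz _
  have hzs1 : Hz s1 = 0 := hzz _
  -- the maximum principle
  have hmax : ∀ y : ℝ, y ≤ s1 → H y ≤ K := by
    intro y hy
    rcases le_or_gt y s0 with h | h
    · rcases eq_or_lt_of_le h with heq | hlt
      · rw [heq]
      · exact le_of_lt (hmono_left (mem_Iic.2 (le_of_lt hlt)) (mem_Iic.2 le_rfl) hlt)
    · rcases le_or_gt y 0 with h0 | h0
      · have h1 : G y ≤ G s0 := hGanti (mem_Iic.2 (le_of_lt hs0lt0)) (mem_Iic.2 h0) (le_of_lt h)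
        have h2 := hGy y
        have h3 := hGy s0
        rw [hzs0] at h3
        have h2n : (0:ℝ) < ((2 * n : ℕ) : ℝ) := by
          have : 0 < 2 * n := by omega
          exact_mod_cast this
        have hsq : (H y)^2 ≤ K^2 := by
          nlinarith [sq_nonneg (((2 * n : ℕ) : ℝ) * Hz y)]
        nlinarith [hsq, hK, sq_nonneg (H y - K)]
      · have h1 : G y ≤ G s1 := hGmono (mem_Ici.2 (le_of_lt h0)) (mem_Ici.2 (by linarith)) hy
        have h2 := hGy y
        have h3 := hGy s1
        rw [hzs1, hHs1] at h3
        have h2n : (0:ℝ) < ((2 * n : ℕ) : ℝ) := by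
          have : 0 < 2 * n := by omega
          exact_mod_cast this
        have hsq : (H y)^2 ≤ K^2 := by
          nlinarith [sq_nonneg (((2 * n : ℕ) : ℝ) * Hz y)]
        nlinarith [hsq, hK, sq_nonneg (H y - K)]
  -- existence and uniqueness of solutions of H y = c
  have hnpos : 0 < n := by omega
  have hIVTright : ∀ cc : ℝ, 0 ≤ cc → ∃! y, y ∈ Ici b ∧ H y = cc := by
    intro cc hcc
    have hev : ∀ᶠ y in atTop, cc ≤ H y :=
      (hermiteH_tendsto_atTop hnpos).eventually (eventually_ge_atTop cc)
    obtain ⟨y2, hy21, hy22⟩ := (hev.and (eventually_ge_atTop b)).exists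
    have hmem : cc ∈ Icc (H b) (H y2) := ⟨by rw [hHb]; exact hcc, hy21⟩
    obtain ⟨y, hy1, hy2⟩ := intermediate_value_Icc hy22 hcontH.continuousOn hmem
    refine ⟨y, ⟨hy1.1, hy2⟩, ?_⟩
    intro z hz
    refine hmono_right.injOn (mem_Ici.2 ?_) (mem_Ici.2 ?_) (hz.2.trans hy2.symm)
    · exact le_trans (le_of_lt hs1b) hz.1
    · exact le_trans (le_of_lt hs1b) hy1.1
  have hIVTglobal : ∀ cc : ℝ, K < cc → ∃! y, H y = cc := by
    intro cc hcc
    have hev : ∀ᶠ y in atTop, cc ≤ H y :=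
      (hermiteH_tendsto_atTop hnpos).eventually (eventually_ge_atTop cc)
    obtain ⟨y2, hy21, hy22⟩ := (hev.and (eventually_ge_atTop s1)).exists
    have hmem : cc ∈ Icc (H s1) (H y2) := ⟨by rw [hHs1]; linarith, hy21⟩
    obtain ⟨y, hy1, hy2⟩ := intermediate_value_Icc hy22 hcontH.continuousOn hmem
    refine ⟨y, hy2, ?_⟩
    intro z hz
    have hzgt : s1 ≤ z := by
      by_contra hcon
      push_neg at hcon
      have := hmax z (le_of_lt hcon)
      rw [hz] at this
      linarith
    exact hmono_right.injOn (mem_Ici.2 hzgt) (mem_Ici.2 hy1.1) (hz.trans hy2.symm)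
  -- trigonometry
  have hpi := Real.pi_pos
  have hsinpos : 0 < Real.sin θ :=
    Real.sin_pos_of_pos_of_lt_pi hθ.1 (by linarith [hθ.2])
  have hcospos : 0 < Real.cos θ := Real.cos_pos_of_mem_Ioo ⟨by linarith [hθ.1], by linarith [hθ.2]⟩
  have hratio : Real.sin θ ≤ Real.cos θ := by
    have h1 : Real.sin θ ≤ Real.sin (π/4) := by
      apply Real.strictMonoOn_sin.monotoneOn ⟨by linarith [hθ.1], by linarith [hθ.2]⟩
        ⟨by linarith, by linarith⟩ hθ.2
    have h2 : Real.cos (π/4) ≤ Real.cos θ :=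
      Real.cos_le_cos_of_nonneg_of_le_pi (le_of_lt hθ.1) (by linarith) hθ.2
    rw [Real.sin_pi_div_four] at h1
    rw [Real.cos_pi_div_four] at h2
    linarith
  have hdivpos : 0 < Real.cos θ / Real.sin θ := div_pos hcospos hsinpos
  have hdiv1 : 1 ≤ Real.cos θ / Real.sin θ := (one_le_div hsinpos).2 hratio
  -- characterization of zeros of Phi
  have hPhi : ∀ t y : ℝ, Phi n θ (t, y) = 0 ↔
      (hermiteH n).eval y = -(Real.cos θ / Real.sin θ) * (hermiteH n).eval t := by
    intro t y
    have hexp : Real.exp (-(t^2 + y^2)/2) ≠ 0 := Real.exp_ne_zero _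
    simp only [Phi]
    rw [mul_eq_zero]
    constructor
    · rintro (h | h)
      · field_simp
        linarith
      · exact absurd h hexp
    · intro h
      left
      field_simp at h
      linarith
  -- Part A: existence and uniqueness of t₀
  have hAexists : ∃! t₀ : ℝ, t₀ < a ∧ H t₀ = -K := by
    have hev : ∀ᶠ y in atBot, H y ≤ -K :=
      (hermiteH_tendsto_atBot_odd hodd).eventually (eventually_le_atBot (-K))
    obtain ⟨y, hy1, hy2⟩ := (hev.and (eventually_le_atBot a)).exists
    have hmem : -K ∈ Icc (H y) (H a) := ⟨hy1, by rw [hHa]; linarith⟩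
    obtain ⟨t₀, ht1, ht2⟩ := intermediate_value_Icc hy2 hcontH.continuousOn hmem
    have ht0a : t₀ < a := lt_of_le_of_ne ht1.2 (by
      intro h
      rw [h, hHa] at ht2
      linarith)
    refine ⟨t₀, ⟨ht0a, ht2⟩, ?_⟩
    intro z hz
    exact hmono_left.injOn (mem_Iic.2 (by linarith [hz.1])) (mem_Iic.2 (by linarith))
      (hz.2.trans ht2.symm)
  refine ⟨hAexists, ?_⟩
  intro t₀ ht₀
  have ht₀K : H t₀ = -K := ht₀.2
  constructor
  · intro t ht
    have hc : 0 ≤ -(Real.cos θ / Real.sin θ) * H t := by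
      have h1 := hHle t ht
      have h2 := mul_nonneg (le_of_lt hdivpos) (neg_nonneg.2 h1)
      linarith [h2]
    obtain ⟨y, hy, hyu⟩ := hIVTright _ hc
    refine ⟨y, ⟨hy.1, (hPhi t y).2 hy.2⟩, ?_⟩
    intro z hz
    exact hyu z ⟨hz.1, (hPhi t z).1 hz.2⟩
  · intro t ht
    have hHt : H t < -K := by
      calc H t < H t₀ := hmono_left (mem_Iic.2 (by linarith [ht₀.1])) (mem_Iic.2 (by linarith [ht₀.1])) ht
        _ = -K := ht₀K
    have hcK : K < -(Real.cos θ / Real.sin θ) * H t := by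
      have h1 : 1 * (-H t) ≤ (Real.cos θ / Real.sin θ) * (-H t) :=
        mul_le_mul_of_nonneg_right hdiv1 (by linarith)
      nlinarith
    obtain ⟨y, hy, hyu⟩ := hIVTglobal _ hcK
    exact ⟨y, (hPhi t y).2 hy, fun z hz => hyu z ((hPhi t z).1 hz)⟩
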